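/- Let G be a DAG with a path cover 𝒫 of size t, and let v be a vertex with more than t in-neighbors. Then some edge incoming to v is transitive: there exist in-neighbors u, u' of v with u ≠ u' such that u reaches u' in G, and hence the edge (u,v) can be removed while preserving reachability. Consequently there exists a transitive sparsification of G in which v has at most t incoming edges. -/

import Mathlib

open Finset

section Prelude

variable {V : Type*}

/-- A (directed) path in the graph with edge relation `E`: nonempty, consecutive
vertices joined by edges, and vertices pairwise distinct. -/
def IsPathOn (E : V → V → Prop) (p : List V) : Prop :=
  p ≠ [] ∧ p.Chain' E ∧ p.Nodup

/-- Reachability in the graph with edge relation `E`. -/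
def Reaches (E : V → V → Prop) : V → V → Prop := Relation.ReflTransGen E

/-- The edges of a path, as the list of consecutive pairs of vertices. -/
def pathEdges (p : List V) : List (V × V) := p.zip p.tail

/-- A path cover: a multiset of paths such that every vertex is on some path. -/
def IsPathCover (E : V → V → Prop) (P : Multiset (List V)) : Prop :=
  (∀ p ∈ P, IsPathOn E p) ∧ ∀ v : V, ∃ p ∈ P, v ∈ p

/-- The width of a graph: the minimum size of a path cover. -/
noncomputable def gwidth (E : V → V → Prop) : ℕ :=
  sInf {n | ∃ P : Multiset (List V), IsPathCover E P ∧ Multiset.card P = n}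

/-- A DAG: no proper (directed) cycles. -/
def IsDAG (E : V → V → Prop) : Prop := ∀ v, ¬ Relation.TransGen E v v

/-- The edge relation of a finite edge set. -/
def edgeRel (E : Finset (V × V)) : V → V → Prop := fun a b => (a, b) ∈ E

/-- Multiplicity of an edge with respect to a multiset of paths. -/
def mult [DecidableEq V] (P : Multiset (List V)) (e : V × V) : ℕ :=
  Multiset.countP (fun p => e ∈ pathEdges p) P

/-- A flow network: a finite edge set, source, sink, and lower bounds (demands). -/
structure FlowNet (V : Type*) where
  E : Finset (V × V)
  s : V
  t : V
  d : V × V → ℕ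

/-- A flow: supported on edges, satisfying the demands, and flow conservation at
every vertex other than the source and the sink. -/
def IsFlow [Fintype V] (N : FlowNet V) (f : V × V → ℕ) : Prop :=
  (∀ e, e ∉ N.E → f e = 0) ∧ (∀ e ∈ N.E, N.d e ≤ f e) ∧
  ∀ v : V, v ≠ N.s → v ≠ N.t → (∑ u : V, f (u, v)) = ∑ u : V, f (v, u)

/-- The size of a flow: net outflow at the source. -/
def flowSize [Fintype V] (N : FlowNet V) (f : V × V → ℕ) : ℤ :=
  (∑ u : V, (f (N.s, u) : ℤ)) - ∑ u : V, (f (u, N.s) : ℤ)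

/-- An `st`-cut, given by the source side `S` (the sink side is the complement). -/
def IsCut (N : FlowNet V) (S : Set V) : Prop := N.s ∈ S ∧ N.t ∉ S

/-- A one-way cut: a cut with no edge crossing from `T = Sᶜ` to `S`. -/
def IsOwCut (N : FlowNet V) (S : Set V) : Prop :=
  IsCut N S ∧ ∀ e ∈ N.E, e.1 ∉ S → e.2 ∉ S

open Classical in
/-- The demand of a cut: sum of demands of edges crossing from `S` to `T`. -/
noncomputable def cutDemand (N : FlowNet V) (S : Set V) : ℕ :=
  ∑ e ∈ N.E.filter (fun e => e.1 ∈ S ∧ e.2 ∉ S), N.d e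

open Classical in
/-- The net flow across a cut: flow from `S` to `T` minus flow from `T` to `S`. -/
noncomputable def cutFlow (N : FlowNet V) (S : Set V) (f : V × V → ℕ) : ℤ :=
  (∑ e ∈ N.E.filter (fun e => e.1 ∈ S ∧ e.2 ∉ S), (f e : ℤ))
    - ∑ e ∈ N.E.filter (fun e => e.1 ∉ S ∧ e.2 ∈ S), (f e : ℤ)

/-- The residual graph of a network w.r.t. a flow `f`: reverse edges of all edges,
plus the edges whose flow strictly exceeds the demand. -/
def ResidualEdge (N : FlowNet V) (f : V × V → ℕ) (u v : V) : Prop :=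
  (v, u) ∈ N.E ∨ ((u, v) ∈ N.E ∧ N.d (u, v) < f (u, v))

/-- Vertices of the flow reduction: two copies of each vertex, plus source/sink. -/
abbrev FR (V : Type*) := (V ⊕ V) ⊕ Bool

def vinF (v : V) : FR V := Sum.inl (Sum.inl v)
def voutF (v : V) : FR V := Sum.inl (Sum.inr v)
def fsrc : FR V := Sum.inr false
def fsnk : FR V := Sum.inr true

/-- Demands of the flow reduction: `1` on each edge `(vin v, vout v)`, else `0`. -/
def redD [DecidableEq V] : FR V × FR V → ℕ
  | (Sum.inl (Sum.inl a), Sum.inl (Sum.inr b)) => if a = b then 1 else 0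
  | _ => 0

/-- The flow reduction of the DAG with edge set `E`. -/
def redNet [Fintype V] [DecidableEq V] (E : Finset (V × V)) : FlowNet (FR V) where
  E := (univ.image fun v : V => (fsrc, vinF v)) ∪ (univ.image fun v : V => (voutF v, fsnk))
        ∪ (univ.image fun v : V => (vinF v, voutF v))
        ∪ (E.image fun e => (voutF e.1, vinF e.2))
  s := fsrc
  t := fsnk
  d := redD

/-- The layered cut `L^{≤ l}`: the source together with all split vertices of level `≤ l`. -/
def layerCut (ℓ : FR V → ℤ) (l : ℤ) : Set (FR V) :=
  {x | x = fsrc ∨ ((∃ v : V, x = vinF v ∨ x = voutF v) ∧ ℓ x ≤ l)}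

open Classical in
/-- The layered antichain `A^l`. -/
noncomputable def layerAntichain [Fintype V] (ℓ : FR V → ℤ) (l : ℤ) : Finset V :=
  univ.filter (fun v => ℓ (vinF v) ≤ l ∧ l < ℓ (voutF v))

end Prelude
section Aux

variable {V : Type*}

private lemma reaches_antisymm' {E : V → V → Prop} (hdag : IsDAG E) {a b : V}
    (h1 : Reaches E a b) (h2 : Reaches E b a) : a = b := by
  by_contra hne
  rcases Relation.reflTransGen_iff_eq_or_transGen.mp h1 with h | h
  · exact hne h.symm
  · exact hdag a (Relation.TransGen.trans_left h h2)

private lemma chain'_comparable {E : V → V → Prop} {p : List V} (h : p.Chain' E)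
    {a b : V} (ha : a ∈ p) (hb : b ∈ p) (hne : a ≠ b) :
    Reaches E a b ∨ Reaches E b a := by
  haveI : IsTrans V (Reaches E) := ⟨fun _ _ _ h1 h2 => Relation.ReflTransGen.trans h1 h2⟩
  have hc : p.Chain' (Reaches E) := h.imp (fun _ _ hab => Relation.ReflTransGen.single hab)
  have hp : p.Pairwise (Reaches E) := List.isChain_iff_pairwise.mp hc
  have hp' : p.Pairwise (fun a b => Reaches E a b ∨ Reaches E b a) :=
    hp.imp (fun h => Or.inl h)
  haveI : Std.Symm (fun a b => Reaches E a b ∨ Reaches E b a) := ⟨fun _ _ h => h.symm⟩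
  exact hp'.forall ha hb hne

open Classical in
private lemma exists_maximal_reach {E : Finset (V × V)} [DecidableEq V]
    (hdag : IsDAG (edgeRel E)) (S : Finset V) :
    ∀ n : ℕ, ∀ u ∈ S, (S.filter (fun w => Reaches (edgeRel E) u w)).card ≤ n →
      ∃ m ∈ S, Reaches (edgeRel E) u m ∧
        ∀ w ∈ S, Reaches (edgeRel E) m w → m = w := by
  classical
  intro n
  induction n with
  | zero =>
    intro u hu hcard
    exfalso
    have : u ∈ S.filter (fun w => Reaches (edgeRel E) u w) :=
      Finset.mem_filter.mpr ⟨hu, Relation.ReflTransGen.refl⟩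
    have := Finset.card_pos.mpr ⟨u, this⟩
    omega
  | succ n ih =>
    intro u hu hcard
    by_cases hmax : ∀ w ∈ S, Reaches (edgeRel E) u w → u = w
    · exact ⟨u, hu, Relation.ReflTransGen.refl, hmax⟩
    · push_neg at hmax
      obtain ⟨w, hw, hr, hne⟩ := hmax
      have hsub : S.filter (fun x => Reaches (edgeRel E) w x) ⊆
          S.filter (fun x => Reaches (edgeRel E) u x) := by
        intro x hx
        rw [Finset.mem_filter] at hx ⊢
        exact ⟨hx.1, hr.trans hx.2⟩
      have hu_not : u ∉ S.filter (fun x => Reaches (edgeRel E) w x) := by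
        rw [Finset.mem_filter]
        rintro ⟨-, hwu⟩
        exact hne (reaches_antisymm' hdag hr hwu)
      have hu_in : u ∈ S.filter (fun x => Reaches (edgeRel E) u x) :=
        Finset.mem_filter.mpr ⟨hu, Relation.ReflTransGen.refl⟩
      have hlt : (S.filter (fun x => Reaches (edgeRel E) w x)).card <
          (S.filter (fun x => Reaches (edgeRel E) u x)).card :=
        Finset.card_lt_card (Finset.ssubset_iff_of_subset hsub |>.mpr ⟨u, hu_in, hu_not⟩)
      obtain ⟨m, hm, hrm, hmmax⟩ := ih w hw (by omega)
      exact ⟨m, hm, hr.trans hrm, hmmax⟩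

end Aux

/-- if a DAG has a path cover of size `t` and `v` has more than `t`
in-neighbors, then some incoming edge of `v` is transitive, and there is a transitive
sparsification in which `v` has at most `t` incoming edges. -/
theorem stmt_9 {V : Type*} [Fintype V] [DecidableEq V] (E : Finset (V × V))
    (hdag : IsDAG (edgeRel E)) (P : Multiset (List V)) (t : ℕ)
    (hP : IsPathCover (edgeRel E) P) (hcard : Multiset.card P = t)
    (v : V) (hv : t < (Finset.univ.filter fun u => (u, v) ∈ E).card) :
    (∃ u u' : V, (u, v) ∈ E ∧ (u', v) ∈ E ∧ u ≠ u' ∧ Reaches (edgeRel E) u u') ∧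
    ∃ E' : Finset (V × V), E' ⊆ E ∧
      (∀ a b : V, Reaches (edgeRel E') a b ↔ Reaches (edgeRel E) a b) ∧
      (Finset.univ.filter fun u => (u, v) ∈ E').card ≤ t := by
  classical
  set S : Finset V := Finset.univ.filter (fun u => (u, v) ∈ E) with hS
  -- choose a path containing each vertex
  have hcover := hP.2
  choose pth hpthP hpthmem using hcover
  have hTcard : P.toFinset.card ≤ t := hcard ▸ Multiset.toFinset_card_le P
  -- Part 1: pigeonhole
  obtain ⟨u, hu, u', hu', hne, heq⟩ :
      ∃ x ∈ S, ∃ y ∈ S, x ≠ y ∧ pth x = pth y := by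
    exact Finset.exists_ne_map_eq_of_card_lt_of_maps_to (f := pth)
      (hTcard.trans_lt hv) (fun a _ => Multiset.mem_toFinset.mpr (hpthP a))
  have hchain : (pth u).Chain' (edgeRel E) := (hP.1 _ (hpthP u)).2.1
  have hcomp := chain'_comparable hchain (hpthmem u) (heq ▸ hpthmem u') hne
  have huE : (u, v) ∈ E := (Finset.mem_filter.mp hu).2
  have hu'E : (u', v) ∈ E := (Finset.mem_filter.mp hu').2
  have part1 : ∃ a b : V, (a, v) ∈ E ∧ (b, v) ∈ E ∧ a ≠ b ∧ Reaches (edgeRel E) a b := by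
    rcases hcomp with h | h
    · exact ⟨u, u', huE, hu'E, hne, h⟩
    · exact ⟨u', u, hu'E, huE, hne.symm, h⟩
  refine ⟨part1, ?_⟩
  -- Part 2: maximal in-neighbors
  set M : Finset V := S.filter (fun m => ∀ w ∈ S, Reaches (edgeRel E) m w → m = w) with hM
  set E' : Finset (V × V) := E.filter (fun e => e.2 ≠ v ∨ e.1 ∈ M) with hE'
  have hsub : E' ⊆ E := Finset.filter_subset _ _
  -- every in-neighbor reaches a maximal one
  have hmaxof : ∀ u ∈ S, ∃ m ∈ M, Reaches (edgeRel E) u m := by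
    intro a ha
    obtain ⟨m, hm, hrm, hmm⟩ := exists_maximal_reach hdag S
      (S.filter (fun w => Reaches (edgeRel E) a w)).card a ha le_rfl
    exact ⟨m, Finset.mem_filter.mpr ⟨hm, hmm⟩, hrm⟩
  -- no maximal in-neighbor is reachable from v
  have hnovm : ∀ m ∈ M, ¬ Reaches (edgeRel E) v m := by
    intro m hm hvm
    have hmE : (m, v) ∈ E := (Finset.mem_filter.mp ((Finset.mem_filter.mp hm).1)).2
    exact hdag v (Relation.TransGen.tail' hvm hmE)
  -- paths avoiding v survive in E'
  have havoid : ∀ a b : V, Reaches (edgeRel E) a b → ¬ Reaches (edgeRel E) v b →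
      Reaches (edgeRel E') a b := by
    intro a b hab
    induction hab using Relation.ReflTransGen.head_induction_on with
    | refl => intro _; exact Relation.ReflTransGen.refl
    | head h' h ih =>
      rename_i x c
      intro hnv
      have hxc : (x, c) ∈ E' := by
        rw [hE', Finset.mem_filter]
        refine ⟨h', ?_⟩
        by_contra hcon
        push_neg at hcon
        exact hnv (hcon.1 ▸ h)
      exact Relation.ReflTransGen.head hxc (ih hnv)
  -- every E-edge is realized in E'
  have hedge : ∀ a b : V, (a, b) ∈ E → Reaches (edgeRel E') a b := by
    intro a b hab
    by_cases hbv : b ≠ v ∨ a ∈ M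
    · exact Relation.ReflTransGen.single (Finset.mem_filter.mpr ⟨hab, hbv⟩)
    · push_neg at hbv
      obtain ⟨hbv, haM⟩ := hbv
      rw [hbv] at hab ⊢
      have haS : a ∈ S := Finset.mem_filter.mpr ⟨Finset.mem_univ a, hab⟩
      obtain ⟨m, hm, hram⟩ := hmaxof a haS
      have h1 : Reaches (edgeRel E') a m := havoid a m hram (hnovm m hm)
      have hmE : (m, v) ∈ E := (Finset.mem_filter.mp ((Finset.mem_filter.mp hm).1)).2
      have h2 : (m, v) ∈ E' := Finset.mem_filter.mpr ⟨hmE, Or.inr hm⟩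
      exact h1.tail h2
  have hreach : ∀ a b : V, Reaches (edgeRel E') a b ↔ Reaches (edgeRel E) a b := by
    intro a b
    constructor
    · intro h
      exact Relation.ReflTransGen.mono (fun x y hxy => hsub hxy) _ _ h
    · intro h
      induction h with
      | refl => exact Relation.ReflTransGen.refl
      | tail h' hstep ih => exact ih.trans (hedge _ _ hstep)
  refine ⟨E', hsub, hreach, ?_⟩
  have hsubM : (Finset.univ.filter fun u => (u, v) ∈ E') ⊆ M := by
    intro a ha
    have haE' : (a, v) ∈ E' := (Finset.mem_filter.mp ha).2
    rcases (Finset.mem_filter.mp haE').2 with h | h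
    · exact absurd rfl h
    · exact h
  -- M injects into paths
  have hMcard : M.card ≤ t := by
    have hinj : Set.InjOn pth M := by
      intro a ha b hb hab
      by_contra hne
      have haS : a ∈ S := (Finset.mem_filter.mp ha).1
      have hbS : b ∈ S := (Finset.mem_filter.mp hb).1
      have hchain : (pth a).Chain' (edgeRel E) := (hP.1 _ (hpthP a)).2.1
      rcases chain'_comparable hchain (hpthmem a) (hab ▸ hpthmem b) hne with h | h
      · exact hne ((Finset.mem_filter.mp ha).2 b hbS h)
      · exact hne (((Finset.mem_filter.mp hb).2 a haS h).symm)
    calc M.card = (M.image pth).card := (Finset.card_image_of_injOn hinj).symm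
      _ ≤ P.toFinset.card := Finset.card_le_card (by
          intro p hp
          obtain ⟨a, _, rfl⟩ := Finset.mem_image.mp hp
          exact Multiset.mem_toFinset.mpr (hpthP a))
      _ ≤ t := hTcard
  exact le_trans (Finset.card_le_card hsubM) hMcard
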